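/- Let M, N be n×n matrices with A = M + N invertible, α > 0, ω ∈ [0,2), and assume H = αI + M and S = αI + N are invertible. Let c_F = ‖I − T_F(α,ω)‖ with T_F(α,ω) = S⁻¹H⁻¹(α²I + MN − (1−ω)αA). Then ‖S⁻¹H⁻¹A‖ = c_F/(α(2−ω)) and ‖S⁻¹H⁻¹‖·‖A‖ ≤ c_F·κ(A)/(α(2−ω)). -/

import Mathlib

open Matrix

set_option maxHeartbeats 1000000
set_option synthInstance.maxHeartbeats 1000000

/-- The spectral (operator 2-)norm of a real matrix. -/
noncomputable def specNorm {n : ℕ} (A : Matrix (Fin n) (Fin n) ℝ) : ℝ :=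
  ‖Matrix.toEuclideanCLM (𝕜 := ℝ) A‖

/-- The (2-norm) condition number `κ(B) = ‖B‖‖B⁻¹‖`. -/
noncomputable def condNum {n : ℕ} (A : Matrix (Fin n) (Fin n) ℝ) : ℝ :=
  specNorm A * specNorm A⁻¹

/-- The GADI iteration matrix `T_F(α,ω) = S⁻¹ H⁻¹ (α² I + M N − (1−ω) α A)`
with `A = M + N`, `H = α I + M`, `S = α I + N`. -/
noncomputable def gadiTF {n : ℕ} (M N : Matrix (Fin n) (Fin n) ℝ) (α ω : ℝ) :
    Matrix (Fin n) (Fin n) ℝ :=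
  (α • 1 + N)⁻¹ * (α • 1 + M)⁻¹ * ((α ^ 2) • 1 + M * N - ((1 - ω) * α) • (M + N))

lemma specNorm_smul {n : ℕ} (c : ℝ) (A : Matrix (Fin n) (Fin n) ℝ) :
    specNorm (c • A) = |c| * specNorm A := by
  unfold specNorm
  rw [_root_.map_smul, show |c| = ‖c‖ from rfl]
  exact norm_smul c (Matrix.toEuclideanCLM (𝕜 := ℝ) A)

lemma specNorm_mul_le {n : ℕ} (A B : Matrix (Fin n) (Fin n) ℝ) :
    specNorm (A * B) ≤ specNorm A * specNorm B := by
  unfold specNorm; rw [_root_.map_mul]; exact norm_mul_le _ _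

/-- **Norm identities involving `c_F = ‖I − T_F(α,ω)‖`:**
`‖S⁻¹H⁻¹A‖ = c_F/(α(2−ω))` and `‖S⁻¹H⁻¹‖‖A‖ ≤ c_F κ(A)/(α(2−ω))`. -/
theorem norm_SinvHinvA_eq {n : ℕ}
    (M N A H S : Matrix (Fin n) (Fin n) ℝ) (hA : A = M + N)
    (α ω : ℝ) (hα : 0 < α) (hω : ω ∈ Set.Ico (0 : ℝ) 2)
    (hH : H = α • 1 + M) (hS : S = α • 1 + N)
    (hAinv : IsUnit A.det) (hHinv : IsUnit H.det) (hSinv : IsUnit S.det) :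
    specNorm (S⁻¹ * H⁻¹ * A) = specNorm (1 - gadiTF M N α ω) / (α * (2 - ω)) ∧
    specNorm (S⁻¹ * H⁻¹) * specNorm A ≤
      specNorm (1 - gadiTF M N α ω) * condNum A / (α * (2 - ω)) := by
  have hd : 0 < α * (2 - ω) := by
    have := hω.2
    nlinarith
  -- 1 = S⁻¹ H⁻¹ (H S)
  have hone : (1 : Matrix (Fin n) (Fin n) ℝ) = S⁻¹ * H⁻¹ * (H * S) := by
    rw [mul_assoc, ← mul_assoc H⁻¹, Matrix.nonsing_inv_mul _ hHinv, one_mul,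
      Matrix.nonsing_inv_mul _ hSinv]
  have key : 1 - gadiTF M N α ω = (α * (2 - ω)) • (S⁻¹ * H⁻¹ * A) := by
    rw [hone, gadiTF, ← hH, ← hS, ← hA, ← Matrix.mul_sub, ← Matrix.mul_smul]
    congr 1
    rw [hH, hS, hA]
    simp only [add_mul, mul_add, smul_mul_assoc, Matrix.mul_smul, one_mul, mul_one,
      smul_smul, smul_add, sub_smul, add_smul, sq]
    abel_nf
    module
  have hnorm : specNorm (1 - gadiTF M N α ω) = (α * (2 - ω)) * specNorm (S⁻¹ * H⁻¹ * A) := by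
    rw [key, specNorm_smul, abs_of_pos hd]
  constructor
  · rw [hnorm]
    exact (mul_div_cancel_left₀ _ hd.ne').symm
  · -- S⁻¹H⁻¹ = (S⁻¹H⁻¹A) A⁻¹
    have hSH : S⁻¹ * H⁻¹ = S⁻¹ * H⁻¹ * A * A⁻¹ := by
      rw [mul_assoc, Matrix.mul_nonsing_inv _ hAinv, mul_one]
    have h1 : specNorm (S⁻¹ * H⁻¹) ≤ specNorm (S⁻¹ * H⁻¹ * A) * specNorm A⁻¹ := by
      have h := specNorm_mul_le (S⁻¹ * H⁻¹ * A) A⁻¹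
      rw [← hSH] at h
      exact h
    have hA0 : 0 ≤ specNorm A := norm_nonneg _
    have h2 : specNorm (S⁻¹ * H⁻¹) * specNorm A ≤
        specNorm (S⁻¹ * H⁻¹ * A) * specNorm A⁻¹ * specNorm A :=
      mul_le_mul_of_nonneg_right h1 hA0
    calc specNorm (S⁻¹ * H⁻¹) * specNorm A
        ≤ specNorm (S⁻¹ * H⁻¹ * A) * specNorm A⁻¹ * specNorm A := h2
      _ = specNorm (1 - gadiTF M N α ω) * condNum A / (α * (2 - ω)) := by
          rw [hnorm, condNum, eq_div_iff hd.ne']; ring
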